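/- arXiv:1106.5879 — 2 statements merged into one kernel-verified Lean document; each statement's English description precedes it below -/
import Mathlib

section
/- Let λ > λ_* and let v ∈ C²(ℝ^N) be bounded with v(x) → 0 as |x| → ∞, satisfying v(x)·(Δv(x) + f_∞(x)v(x) − λv(x)) ≥ 0 for all x. Then for every ε ∈ (0, λ − λ_*) there exists C_ε > 0 such that |v(x)| ≤ ‖v‖_∞ · exp(−√(λ − λ_* − ε)·(|x| − C_ε)) for all x ∈ ℝ^N. -/
open MeasureTheory Filter Topology

/-- The Laplacian of `u : ℝ^N → ℝ`, as the sum of second partial derivatives. -/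
noncomputable def lap {N : ℕ} (u : EuclideanSpace ℝ (Fin N) → ℝ)
    (x : EuclideanSpace ℝ (Fin N)) : ℝ :=
  ∑ i, fderiv ℝ (fun y => fderiv ℝ u y (EuclideanSpace.single i 1)) x
    (EuclideanSpace.single i 1)


lemma pos_right {χ : ℝ → ℝ} {c : ℝ} (h : HasDerivAt χ c 0) (h0 : χ 0 = 0) (hc : 0 < c) :
    ∀ᶠ t in 𝓝[>] (0:ℝ), 0 < χ t := by
  have hs := hasDerivAt_iff_tendsto_slope.1 h
  have h1 : ∀ᶠ t in 𝓝[≠] (0:ℝ), 0 < slope χ 0 t :=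
    hs.eventually (eventually_gt_nhds hc)
  have hmono : 𝓝[>] (0:ℝ) ≤ 𝓝[≠] (0:ℝ) :=
    nhdsWithin_mono (0:ℝ) (fun t (ht : t ∈ Set.Ioi 0) => (ne_of_gt ht : t ≠ 0))
  filter_upwards [hmono h1, self_mem_nhdsWithin] with t ht ht'
  have hsl : slope χ 0 t = χ t / t := by simp [slope, h0]; ring
  rw [hsl] at ht
  have htpos : (0:ℝ) < t := ht'
  have := mul_pos ht htpos
  calc (0:ℝ) < χ t / t * t := this
    _ = χ t := by field_simp

variable {N : ℕ}
local notation "Euc" => EuclideanSpace ℝ (Fin N)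

lemma second_deriv_test_dir {g : Euc → ℝ} {x0 : Euc} (hg : ContDiffAt ℝ 2 g x0)
    (hmax : IsLocalMax g x0) (w : Euc) :
    fderiv ℝ (fun y => fderiv ℝ g y w) x0 w ≤ 0 := by
  by_contra hcon
  push_neg at hcon
  set Dg : Euc → ℝ := fun y => fderiv ℝ g y w with hDgdef
  set L : ℝ → Euc := fun t => x0 + t • w with hLdef
  have hL : ∀ t : ℝ, HasDerivAt L w t := by
    intro t
    have h := ((hasDerivAt_id t).smul_const w).const_add x0
    simp only [id, one_smul] at h; exact h
  have hL0 : L 0 = x0 := by simp [hLdef]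
  set ψ : ℝ → ℝ := fun t => g (L t) with hψdef
  set χ : ℝ → ℝ := fun t => Dg (L t) with hχdef
  have hgev : ∀ᶠ y in 𝓝 x0, ContDiffAt ℝ 2 g y := hg.eventually (by simp)
  have hLev : ∀ᶠ t in 𝓝 (0:ℝ), ContDiffAt ℝ 2 g (L t) := by
    have : ContinuousAt L 0 := (hL 0).continuousAt
    exact this (hL0 ▸ hgev)
  have hψd : ∀ᶠ t in 𝓝 (0:ℝ), HasDerivAt ψ (χ t) t := by
    filter_upwards [hLev] with t ht
    have hdg : DifferentiableAt ℝ g (L t) := ht.differentiableAt (by norm_num)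
    exact hdg.hasFDerivAt.comp_hasDerivAt t (hL t)
  -- Dg is differentiable at x0
  have hDg1 : ContDiffAt ℝ 1 Dg x0 := by
    have h1 : ContDiffAt ℝ 1 (fun y => fderiv ℝ g y) x0 :=
      hg.fderiv_right (by norm_num)
    exact h1.clm_apply contDiffAt_const
  have hχd : HasDerivAt χ (fderiv ℝ Dg x0 w) 0 := by
    have hfd : HasFDerivAt Dg (fderiv ℝ Dg x0) (L 0) := by
      rw [hL0]; exact (hDg1.differentiableAt one_ne_zero).hasFDerivAt
    exact hfd.comp_hasDerivAt 0 (hL 0)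
  have hψmax : IsLocalMax ψ 0 := by
    have hmax' : IsLocalMax g (L 0) := hL0.symm ▸ hmax
    exact hmax'.comp_continuous (hL 0).continuousAt
  have hχ0 : χ 0 = 0 := by
    have h1 : HasDerivAt ψ (χ 0) 0 := hψd.self_of_nhds
    have h2 := hψmax.deriv_eq_zero
    rw [h1.deriv] at h2; exact h2
  have hpos := pos_right hχd hχ0 hcon
  obtain ⟨δ1, hδ1, hd1⟩ := Metric.eventually_nhds_iff.1 hψd
  obtain ⟨δ2, hδ2, hd2⟩ := mem_nhdsGT_iff_exists_Ioo_subset.1 hpos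
  obtain ⟨δ3, hδ3, hd3⟩ := Metric.eventually_nhds_iff.1 hψmax
  have hδ2' : (0:ℝ) < δ2 := hδ2
  set δ : ℝ := min δ1 (min δ2 δ3) / 2 with hδdef
  have hδ : 0 < δ := by positivity
  have hδ1' : δ < δ1 := by
    have h := min_le_left δ1 (min δ2 δ3); rw [hδdef]; linarith
  have hδ2'' : δ < δ2 := by
    have h := min_le_right δ1 (min δ2 δ3)
    have h' := min_le_left δ2 δ3
    rw [hδdef]; linarith
  have hδ3' : δ < δ3 := by
    have h := min_le_right δ1 (min δ2 δ3)
    have h' := min_le_right δ2 δ3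
    rw [hδdef]; linarith
  have hmono : StrictMonoOn ψ (Set.Icc 0 δ) := by
    apply strictMonoOn_of_deriv_pos (convex_Icc 0 δ)
    · intro t ht
      have habs : dist t (0:ℝ) < δ1 := by
        rw [Real.dist_eq, sub_zero, abs_of_nonneg ht.1]
        exact lt_of_le_of_lt ht.2 hδ1'
      exact (hd1 habs).continuousAt.continuousWithinAt
    · intro t ht
      rw [interior_Icc] at ht
      have habs : dist t (0:ℝ) < δ1 := by
        rw [Real.dist_eq, sub_zero, abs_of_nonneg ht.1.le]
        exact lt_trans ht.2 hδ1'
      rw [(hd1 habs).deriv]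
      exact hd2 ⟨ht.1, lt_trans ht.2 hδ2''⟩
  have h5 : ψ 0 < ψ δ := hmono (Set.left_mem_Icc.2 hδ.le) (Set.right_mem_Icc.2 hδ.le) hδ
  have h6 : ψ δ ≤ ψ 0 := by
    apply hd3
    rw [Real.dist_eq, sub_zero, abs_of_nonneg hδ.le]
    exact hδ3'
  linarith

lemma lap_nonpos_of_isLocalMax {g : Euc → ℝ} {x0 : Euc} (hg : ContDiffAt ℝ 2 g x0)
    (hmax : IsLocalMax g x0) : lap g x0 ≤ 0 :=
  Finset.sum_nonpos fun i _ => second_deriv_test_dir hg hmax _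

lemma fderiv_one_apply (g : ℝ → ℝ) (a t : ℝ) : fderiv ℝ g a t = t * deriv g a := by
  have h1 : t = t • (1:ℝ) := by simp
  rw [h1, _root_.map_smul, fderiv_apply_one_eq_deriv]
  simp

lemma lap_neg (h : Euc → ℝ) (x : Euc) : lap (fun y => -(h y)) x = - lap h x := by
  unfold lap
  rw [← Finset.sum_neg_distrib]
  apply Finset.sum_congr rfl
  intro i _
  have h1 : (fun y => fderiv ℝ (fun z => -(h z)) y (EuclideanSpace.single i 1))
      = fun y => -(fderiv ℝ h y (EuclideanSpace.single i 1)) := by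
    funext y
    rw [fderiv_fun_neg]
    simp
  rw [h1, fderiv_fun_neg]
  simp

lemma lap_sub {g h : Euc → ℝ} {x : Euc} (hg : ContDiffAt ℝ 2 g x) (hh : ContDiffAt ℝ 2 h x) :
    lap (fun y => g y - h y) x = lap g x - lap h x := by
  unfold lap
  rw [← Finset.sum_sub_distrib]
  apply Finset.sum_congr rfl
  intro i _
  set e := EuclideanSpace.single (𝕜 := ℝ) (i : Fin N) (1:ℝ) with he
  have hgev : ∀ᶠ y in 𝓝 x, ContDiffAt ℝ 2 g y := hg.eventually (by simp)
  have hhev : ∀ᶠ y in 𝓝 x, ContDiffAt ℝ 2 h y := hh.eventually (by simp)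
  have hev : (fun y => fderiv ℝ (fun z => g z - h z) y e)
      =ᶠ[𝓝 x] (fun y => fderiv ℝ g y e - fderiv ℝ h y e) := by
    filter_upwards [hgev, hhev] with y hgy hhy
    rw [fderiv_fun_sub (hgy.differentiableAt two_ne_zero) (hhy.differentiableAt two_ne_zero)]
    simp
  rw [hev.fderiv_eq]
  have dg : DifferentiableAt ℝ (fun y => fderiv ℝ g y e) x :=
    ((hg.fderiv_right (m := 1) (by norm_num)).clm_apply contDiffAt_const).differentiableAt one_ne_zero
  have dh : DifferentiableAt ℝ (fun y => fderiv ℝ h y e) x :=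
    ((hh.fderiv_right (m := 1) (by norm_num)).clm_apply contDiffAt_const).differentiableAt one_ne_zero
  rw [fderiv_fun_sub dg dh]
  simp

lemma lap_comp {u : Euc → ℝ} {F : ℝ → ℝ} {x : Euc}
    (hu : ContDiffAt ℝ 2 u x) (hF : ContDiffAt ℝ 2 F (u x)) :
    lap (fun y => F (u y)) x =
      deriv (deriv F) (u x) * ∑ i, (fderiv ℝ u x (EuclideanSpace.single i 1))^2
      + deriv F (u x) * lap u x := by
  have huev : ∀ᶠ y in 𝓝 x, ContDiffAt ℝ 2 u y := hu.eventually (by simp)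
  have hFev : ∀ᶠ y in 𝓝 x, ContDiffAt ℝ 2 F (u y) :=
    hu.continuousAt.eventually (hF.eventually (by simp))
  have hderivF : ContDiffAt ℝ 1 (deriv F) (u x) := by
    have h1 : ContDiffAt ℝ 1 (fun s => fderiv ℝ F s (1:ℝ)) (u x) :=
      (hF.fderiv_right (by norm_num)).clm_apply contDiffAt_const
    have h2 : deriv F = fun s => fderiv ℝ F s (1:ℝ) := by
      funext s; exact (fderiv_apply_one_eq_deriv).symm
    rw [h2]; exact h1
  have key : ∀ i : Fin N,
      fderiv ℝ (fun y => fderiv ℝ (fun z => F (u z)) y (EuclideanSpace.single i 1)) x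
        (EuclideanSpace.single i 1)
      = deriv (deriv F) (u x) * (fderiv ℝ u x (EuclideanSpace.single i 1))^2
        + deriv F (u x) *
          fderiv ℝ (fun y => fderiv ℝ u y (EuclideanSpace.single i 1)) x
            (EuclideanSpace.single i 1) := by
    intro i
    set e := EuclideanSpace.single (𝕜 := ℝ) (i : Fin N) (1:ℝ) with he
    have step1 : (fun y => fderiv ℝ (fun z => F (u z)) y e)
        =ᶠ[𝓝 x] (fun y => fderiv ℝ u y e * deriv F (u y)) := by
      filter_upwards [huev, hFev] with y huy hFy
      have h1 : fderiv ℝ (fun z => F (u z)) y = (fderiv ℝ F (u y)).comp (fderiv ℝ u y) :=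
        fderiv_comp y (hFy.differentiableAt two_ne_zero) (huy.differentiableAt two_ne_zero)
      rw [h1]
      simp only [ContinuousLinearMap.comp_apply]
      rw [fderiv_one_apply]
    rw [step1.fderiv_eq]
    have hB : DifferentiableAt ℝ (fun y => fderiv ℝ u y e) x :=
      ((hu.fderiv_right (m := 1) (by norm_num)).clm_apply contDiffAt_const).differentiableAt one_ne_zero
    have hA : DifferentiableAt ℝ (fun y => deriv F (u y)) x :=
      (hderivF.differentiableAt one_ne_zero).comp x (hu.differentiableAt two_ne_zero)
    rw [fderiv_fun_mul hB hA]
    simp only [ContinuousLinearMap.add_apply, ContinuousLinearMap.smul_apply, smul_eq_mul]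
    have hcomp : fderiv ℝ (fun y => deriv F (u y)) x =
        (fderiv ℝ (deriv F) (u x)).comp (fderiv ℝ u x) :=
      fderiv_comp x (hderivF.differentiableAt one_ne_zero) (hu.differentiableAt two_ne_zero)
    rw [hcomp]
    simp only [ContinuousLinearMap.comp_apply]
    rw [fderiv_one_apply]
    ring
  unfold lap
  rw [Finset.mul_sum, Finset.mul_sum, ← Finset.sum_add_distrib]
  exact Finset.sum_congr rfl fun i _ => key i

lemma fderiv_normsq (x w : Euc) : fderiv ℝ (fun y : Euc => ‖y‖^2) x w = 2 * inner ℝ x w := by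
  have h := (hasFDerivAt_id (𝕜 := ℝ) (x := x)).norm_sq
  have h2 : fderiv ℝ (fun y : Euc => ‖y‖^2) x = 2 • (innerSL ℝ x).comp (ContinuousLinearMap.id ℝ Euc) := by
    simpa using h.fderiv
  rw [h2]
  simp

lemma lap_normsq (x : Euc) : lap (fun y : Euc => ‖y‖^2) x = 2 * N := by
  unfold lap
  have key : ∀ i : Fin N,
      fderiv ℝ (fun y : Euc => fderiv ℝ (fun z : Euc => ‖z‖^2) y (EuclideanSpace.single i 1)) x
        (EuclideanSpace.single i 1) = 2 := by
    intro i
    set e := EuclideanSpace.single (𝕜 := ℝ) (i : Fin N) (1:ℝ) with he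
    have h1 : (fun y : Euc => fderiv ℝ (fun z : Euc => ‖z‖^2) y e)
        = fun y => ((2:ℝ) • innerSL ℝ e : Euc →L[ℝ] ℝ) y := by
      funext y
      rw [fderiv_normsq]
      simp [real_inner_comm]
    rw [h1, (((2:ℝ) • innerSL ℝ e : Euc →L[ℝ] ℝ)).fderiv]
    have : (inner ℝ e e : ℝ) = ‖e‖^2 := real_inner_self_eq_norm_sq e
    simp [this, he, EuclideanSpace.norm_single]
  rw [Finset.sum_congr rfl fun i _ => key i]
  simp [mul_comm]

lemma sum_sq_fderiv_normsq (x : Euc) :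
    ∑ i, (fderiv ℝ (fun y : Euc => ‖y‖^2) x (EuclideanSpace.single i 1))^2 = 4 * ‖x‖^2 := by
  have key : ∀ i : Fin N,
      (fderiv ℝ (fun y : Euc => ‖y‖^2) x (EuclideanSpace.single i 1))^2 = 4 * (x i)^2 := by
    intro i
    rw [fderiv_normsq]
    have : (inner ℝ x (EuclideanSpace.single i (1:ℝ)) : ℝ) = x i := by
      rw [EuclideanSpace.inner_single_right]
      simp
    rw [this]; ring
  rw [Finset.sum_congr rfl fun i _ => key i, ← Finset.mul_sum]
  congr 1
  rw [EuclideanSpace.norm_eq]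
  rw [Real.sq_sqrt (by positivity)]
  exact Finset.sum_congr rfl fun i _ => by rw [Real.norm_eq_abs, sq_abs]

lemma H_hasDeriv {c k s : ℝ} (hs : 0 < s) :
    HasDerivAt (fun t => c * Real.exp (-k * Real.sqrt t))
      (c * Real.exp (-k * Real.sqrt s) * (-k / (2 * Real.sqrt s))) s := by
  have hsq := Real.hasDerivAt_sqrt hs.ne'
  have h1 : HasDerivAt (fun t => -k * Real.sqrt t) (-k * (1 / (2 * Real.sqrt s))) s :=
    hsq.const_mul (-k)
  have h2 := (Real.hasDerivAt_exp (-k * Real.sqrt s)).comp s h1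
  have h3 := h2.const_mul c
  refine h3.congr_deriv ?_
  ring

lemma H1_hasDeriv {c k s : ℝ} (hs : 0 < s) :
    HasDerivAt (fun t => c * Real.exp (-k * Real.sqrt t) * (-k / (2 * Real.sqrt t)))
      (c * Real.exp (-k * Real.sqrt s) * (k^2 / (4*s) + k / (4 * s * Real.sqrt s))) s := by
  have hsqpos : 0 < Real.sqrt s := Real.sqrt_pos.2 hs
  have hsq := Real.hasDerivAt_sqrt hs.ne'
  have hinv : HasDerivAt (fun t => (Real.sqrt t)⁻¹)
      (-(1 / (2 * Real.sqrt s)) / (Real.sqrt s)^2) s := hsq.inv hsqpos.ne'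
  have h2 : HasDerivAt (fun t => -k / (2 * Real.sqrt t))
      ((-k/2) * (-(1 / (2 * Real.sqrt s)) / (Real.sqrt s)^2)) s := by
    have h := hinv.const_mul (-k/2)
    have hfun : (fun t => -k / (2 * Real.sqrt t)) = (fun t => (-k/2) * (Real.sqrt t)⁻¹) := by
      funext t; field_simp
    rw [hfun]
    exact h
  have hmul := (H_hasDeriv (c := c) (k := k) hs).mul h2
  refine hmul.congr_deriv ?_
  have hsq2 : (Real.sqrt s)^2 = s := Real.sq_sqrt hs.le
  rw [hsq2]
  field_simp
  linear_combination (-4*c*k^2) * hsq2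

lemma lap_barrier {c k : ℝ} (hc : 0 ≤ c) (hk : 0 ≤ k) (hN : 1 ≤ N) {x : Euc} (hx : x ≠ 0) :
    lap (fun y : Euc => c * Real.exp (-k * ‖y‖)) x ≤ k^2 * (c * Real.exp (-k * ‖x‖)) := by
  have hr : 0 < ‖x‖ := norm_pos_iff.2 hx
  have hfun : (fun y : Euc => c * Real.exp (-k * ‖y‖))
      = fun y : Euc => (fun s => c * Real.exp (-k * Real.sqrt s)) ((fun z : Euc => ‖z‖^2) y) := by
    funext y
    simp [Real.sqrt_sq (norm_nonneg y)]
  rw [hfun]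
  have hs0 : (0:ℝ) < ‖x‖^2 := by positivity
  have hqC : ContDiffAt ℝ 2 (fun z : Euc => ‖z‖^2) x := (contDiff_norm_sq ℝ).contDiffAt
  have hHC : ContDiffAt ℝ 2 (fun s => c * Real.exp (-k * Real.sqrt s)) ((fun z : Euc => ‖z‖^2) x) := by
    show ContDiffAt ℝ 2 (fun s => c * Real.exp (-k * Real.sqrt s)) (‖x‖^2)
    have hsq : ContDiffAt ℝ 2 Real.sqrt (‖x‖^2) := Real.contDiffAt_sqrt hs0.ne'
    exact contDiffAt_const.mul
      ((Real.contDiff_exp.contDiffAt).comp _ (contDiffAt_const.mul hsq))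
  rw [lap_comp hqC hHC]
  have hsr : Real.sqrt (‖x‖^2) = ‖x‖ := Real.sqrt_sq (norm_nonneg x)
  -- first derivative of H at ‖x‖^2
  have hd1 : deriv (fun s => c * Real.exp (-k * Real.sqrt s)) ((fun z : Euc => ‖z‖^2) x)
      = c * Real.exp (-k * ‖x‖) * (-k / (2 * ‖x‖)) := by
    show deriv (fun s => c * Real.exp (-k * Real.sqrt s)) (‖x‖^2) = _
    rw [(H_hasDeriv hs0).deriv, hsr]
  have hd2 : deriv (deriv (fun s => c * Real.exp (-k * Real.sqrt s))) ((fun z : Euc => ‖z‖^2) x)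
      = c * Real.exp (-k * ‖x‖) * (k^2 / (4*‖x‖^2) + k / (4 * ‖x‖^2 * ‖x‖)) := by
    show deriv (deriv (fun s => c * Real.exp (-k * Real.sqrt s))) (‖x‖^2) = _
    have hev : deriv (fun s => c * Real.exp (-k * Real.sqrt s))
        =ᶠ[𝓝 (‖x‖^2)] (fun t => c * Real.exp (-k * Real.sqrt t) * (-k / (2 * Real.sqrt t))) := by
      filter_upwards [eventually_gt_nhds hs0] with t ht
      exact (H_hasDeriv ht).deriv
    rw [hev.deriv_eq, (H1_hasDeriv hs0).deriv, hsr]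
  rw [hd1, hd2, sum_sq_fderiv_normsq, lap_normsq]
  have hrr : ‖x‖ ≠ 0 := hr.ne'
  have hexp : 0 ≤ Real.exp (-k * ‖x‖) := (Real.exp_pos _).le
  have hterm : c * Real.exp (-k * ‖x‖) * (k^2 / (4*‖x‖^2) + k / (4 * ‖x‖^2 * ‖x‖)) * (4 * ‖x‖^2)
      + c * Real.exp (-k * ‖x‖) * (-k / (2 * ‖x‖)) * (2 * N)
      = k^2 * (c * Real.exp (-k * ‖x‖)) + (k * (N - 1) / ‖x‖) * (c * Real.exp (-k * ‖x‖)) * (-1) := by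
    field_simp
    ring
  rw [hterm]
  have hpos : 0 ≤ (k * (N - 1) / ‖x‖) * (c * Real.exp (-k * ‖x‖)) := by
    apply mul_nonneg
    · apply div_nonneg _ hr.le
      apply mul_nonneg hk
      have : (1:ℝ) ≤ (N:ℝ) := by exact_mod_cast hN
      linarith
    · exact mul_nonneg hc hexp
  linarith

lemma comparison {w φ : Euc → ℝ} {R mu k : ℝ} (hR : 0 < R) (hμk : k^2 < mu)
    (hw : ContDiff ℝ 2 w)
    (hw0 : Tendsto w (cocompact Euc) (𝓝 0))
    (hφcont : Continuous φ)
    (hφ0 : Tendsto φ (cocompact Euc) (𝓝 0))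
    (hφpos : ∀ x, 0 < φ x)
    (hφC2 : ∀ x : Euc, x ≠ 0 → ContDiffAt ℝ 2 φ x)
    (hφlap : ∀ x : Euc, R ≤ ‖x‖ → lap φ x ≤ k^2 * φ x)
    (hbnd : ∀ x : Euc, ‖x‖ = R → w x ≤ φ x)
    (hsub : ∀ x : Euc, R ≤ ‖x‖ → 0 < w x → mu * w x ≤ lap w x) :
    ∀ x : Euc, R ≤ ‖x‖ → w x ≤ φ x := by
  by_contra hcon
  push_neg at hcon
  obtain ⟨x1, hx1R, hx1⟩ := hcon
  have hm : 0 < w x1 - φ x1 := sub_pos.2 hx1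
  have hh0 : Tendsto (fun y => w y - φ y) (cocompact Euc) (𝓝 0) := by
    simpa using hw0.sub hφ0
  have hev : ∀ᶠ y in cocompact Euc, w y - φ y < w x1 - φ x1 :=
    hh0.eventually (eventually_lt_nhds hm)
  obtain ⟨K, hKc, hK⟩ := mem_cocompact.1 hev
  set T : Set Euc := {y | R ≤ ‖y‖} with hT
  have hTclosed : IsClosed T := isClosed_le continuous_const continuous_norm
  have hAc : IsCompact ((K ∪ {x1}) ∩ T) :=
    (hKc.union isCompact_singleton).inter_right hTclosed
  have hx1T : x1 ∈ T := hx1R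
  have hAne : ((K ∪ {x1}) ∩ T).Nonempty := ⟨x1, Or.inr rfl, hx1T⟩
  have hhcont : Continuous (fun y => w y - φ y) := (hw.continuous).sub hφcont
  obtain ⟨x0, hx0A, hx0max⟩ := hAc.exists_isMaxOn hAne hhcont.continuousOn
  have hx0T : x0 ∈ T := hx0A.2
  have hmax_T : ∀ y ∈ T, w y - φ y ≤ w x0 - φ x0 := by
    intro y hy
    by_cases hyA : y ∈ (K ∪ {x1}) ∩ T
    · exact hx0max hyA
    · have hyK : y ∉ K := fun hk => hyA ⟨Or.inl hk, hy⟩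
      have h1 := hK hyK
      have h2 : w x1 - φ x1 ≤ w x0 - φ x0 := hx0max ⟨Or.inr rfl, hx1T⟩
      exact le_of_lt (lt_of_lt_of_le h1 h2)
  have hpos0 : 0 < w x0 - φ x0 := lt_of_lt_of_le hm (hmax_T x1 hx1T)
  have hx0R : R < ‖x0‖ := by
    have hx0T' : R ≤ ‖x0‖ := hx0T
    rcases lt_or_eq_of_le hx0T' with h | h
    · exact h
    · exfalso
      have := hbnd x0 h.symm
      linarith
  have hmem : T ∈ 𝓝 x0 := by
    apply mem_of_superset (((isOpen_lt continuous_const continuous_norm).mem_nhds hx0R))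
    intro y hy
    have hy' : R < ‖y‖ := hy
    show R ≤ ‖y‖
    exact le_of_lt hy'
  have hmaxOn : IsMaxOn (fun y => w y - φ y) T x0 := isMaxOn_iff.2 hmax_T
  have hlocmax : IsLocalMax (fun y => w y - φ y) x0 := hmaxOn.isLocalMax hmem
  have hx0ne : x0 ≠ 0 := by
    intro h0
    rw [h0, norm_zero] at hx0R
    linarith
  have hC2 : ContDiffAt ℝ 2 (fun y => w y - φ y) x0 :=
    (hw.contDiffAt).sub (hφC2 x0 hx0ne)
  have hlap_le : lap (fun y => w y - φ y) x0 ≤ 0 :=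
    lap_nonpos_of_isLocalMax hC2 hlocmax
  have hlapsub : lap (fun y => w y - φ y) x0 = lap w x0 - lap φ x0 :=
    lap_sub hw.contDiffAt (hφC2 x0 hx0ne)
  have hwx0 : 0 < w x0 := lt_of_lt_of_le (hφpos x0) (by linarith)
  have h1 := hsub x0 hx0R.le hwx0
  have h2 := hφlap x0 hx0R.le
  nlinarith [sq_nonneg k]

lemma barrier_contDiffAt {c k : ℝ} {x : Euc} (hx : x ≠ 0) :
    ContDiffAt ℝ 2 (fun y : Euc => c * Real.exp (-k * ‖y‖)) x := by
  have hr : 0 < ‖x‖ := norm_pos_iff.2 hx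
  have hfun : (fun y : Euc => c * Real.exp (-k * ‖y‖))
      = fun y : Euc => (fun s => c * Real.exp (-k * Real.sqrt s)) (‖y‖^2) := by
    funext y; simp [Real.sqrt_sq (norm_nonneg y)]
  rw [hfun]
  have hs0 : (0:ℝ) < ‖x‖^2 := by positivity
  exact ContDiffAt.comp (g := fun s => c * Real.exp (-k * Real.sqrt s)) x (contDiffAt_const.mul ((Real.contDiff_exp.contDiffAt).comp _
    (contDiffAt_const.mul (Real.contDiffAt_sqrt hs0.ne'))))
    ((contDiff_norm_sq ℝ).contDiffAt)


set_option maxHeartbeats 1000000 in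
/-- exponential decay estimate. If `λ > λ_* = limsup_{|x|→∞} f_∞(x)` and the
bounded `C²` function `v`, vanishing at infinity, satisfies
`v·(Δv + f_∞ v − λ v) ≥ 0` on `ℝ^N`, then for every `ε ∈ (0, λ − λ_*)` there is `C_ε > 0`
with `|v(x)| ≤ ‖v‖_∞ exp(−√(λ − λ_* − ε)(|x| − C_ε))` for all `x`. -/
theorem stmt2 {N : ℕ} (hN : 1 ≤ N)
    (f : EuclideanSpace ℝ (Fin N) → ℝ) (hfc : Continuous f) (hfb : ∃ M, ∀ x, |f x| ≤ M)
    (lamStar lam : ℝ) (hstar : lamStar = limsup f (cocompact (EuclideanSpace ℝ (Fin N))))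
    (hlam : lamStar < lam)
    (v : EuclideanSpace ℝ (Fin N) → ℝ) (hv : ContDiff ℝ 2 v)
    (hvb : ∃ M, ∀ x, |v x| ≤ M)
    (hv0 : Tendsto v (cocompact (EuclideanSpace ℝ (Fin N))) (nhds 0))
    (hineq : ∀ x, 0 ≤ v x * (lap v x + f x * v x - lam * v x)) :
    ∀ ε, 0 < ε → ε < lam - lamStar → ∃ C, 0 < C ∧ ∀ x,
      |v x| ≤ (⨆ y, |v y|) * Real.exp (-Real.sqrt (lam - lamStar - ε) * (‖x‖ - C)) := by
  intro ε hε1 hε2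
  set k : ℝ := Real.sqrt (lam - lamStar - ε) with hkdef
  have hk2 : k^2 = lam - lamStar - ε := Real.sq_sqrt (by linarith)
  have hk0 : 0 ≤ k := Real.sqrt_nonneg _
  have hμk : k^2 < lam - lamStar - ε/2 := by rw [hk2]; linarith
  -- supremum
  obtain ⟨M, hM⟩ := hvb
  have hbdd : BddAbove (Set.range fun y => |v y|) := ⟨M, by rintro s ⟨y, rfl⟩; exact hM y⟩
  set S : ℝ := ⨆ y, |v y| with hSdef
  have hS : ∀ x, |v x| ≤ S := fun x => le_ciSup hbdd x
  have hS0 : 0 ≤ S := le_trans (abs_nonneg _) (hS 0)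
  -- radius from limsup
  have hbound : Filter.IsBoundedUnder (· ≤ ·) (cocompact (EuclideanSpace ℝ (Fin N))) f := by
    obtain ⟨Mf, hMf⟩ := hfb
    exact isBoundedUnder_of ⟨Mf, fun x => (le_abs_self _).trans (hMf x)⟩
  have hlim : ∀ᶠ y in cocompact (EuclideanSpace ℝ (Fin N)), f y < lamStar + ε/2 := by
    apply eventually_lt_of_limsup_lt _ hbound
    rw [← hstar]; linarith
  obtain ⟨K, hKc, hK⟩ := mem_cocompact.1 hlim
  obtain ⟨R0, hR0⟩ := (Metric.isBounded_iff_subset_closedBall 0).1 hKc.isBounded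
  set R : ℝ := max R0 0 + 1 with hRdef
  have hR : 0 < R := by
    have := le_max_right R0 0
    rw [hRdef]; linarith
  have hfR : ∀ x : EuclideanSpace ℝ (Fin N), R ≤ ‖x‖ → f x < lamStar + ε/2 := by
    intro x hx
    apply hK
    intro hxK
    have h1 := hR0 hxK
    rw [Metric.mem_closedBall, dist_zero_right] at h1
    have := le_max_left R0 0
    rw [hRdef] at hx
    linarith
  set C : ℝ := R + 1 with hCdef
  have hC : 0 < C := by rw [hCdef]; linarith
  refine ⟨C, hC, ?_⟩
  rcases eq_or_lt_of_le hS0 with hSz | hSpos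
  · intro x
    have h1 := hS x
    rw [← hSz] at h1 ⊢
    have := abs_nonneg (v x)
    have h2 : |v x| = 0 := le_antisymm h1 this
    rw [h2]
    simp
  -- main case S > 0
  set c : ℝ := S * Real.exp (k * C) with hcdef
  have hcpos : 0 < c := mul_pos hSpos (Real.exp_pos _)
  set φ : EuclideanSpace ℝ (Fin N) → ℝ := fun y => c * Real.exp (-k * ‖y‖) with hφdef
  have hφpos : ∀ x, 0 < φ x := fun x => mul_pos hcpos (Real.exp_pos _)
  have hφcont : Continuous φ :=
    continuous_const.mul (Real.continuous_exp.comp (continuous_const.mul continuous_norm))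
  have hφ0 : Tendsto φ (cocompact (EuclideanSpace ℝ (Fin N))) (𝓝 0) := by
    rcases eq_or_lt_of_le hk0 with hkz | hkpos
    · exfalso
      have : (0:ℝ) < k^2 := by rw [hk2]; linarith
      rw [← hkz] at this; simp at this
    have h1 : Tendsto (fun y : EuclideanSpace ℝ (Fin N) => -k * ‖y‖)
        (cocompact (EuclideanSpace ℝ (Fin N))) atBot :=
      (tendsto_const_mul_atBot_of_neg (by linarith)).2 tendsto_norm_cocompact_atTop
    have h2 := Real.tendsto_exp_atBot.comp h1
    have h3 := h2.const_mul c
    rw [hφdef]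
    have h4 : (fun y : EuclideanSpace ℝ (Fin N) => c * Real.exp (-k * ‖y‖))
        = fun y => c * (Real.exp ∘ fun y : EuclideanSpace ℝ (Fin N) => -k * ‖y‖) y := by
      funext y; simp [Function.comp]
    rw [h4]
    simpa using h3
  have hφlap : ∀ x : EuclideanSpace ℝ (Fin N), R ≤ ‖x‖ → lap φ x ≤ k^2 * φ x := by
    intro x hx
    have hxne : x ≠ 0 := by
      intro h0; rw [h0, norm_zero] at hx; linarith
    exact lap_barrier hcpos.le hk0 hN hxne
  have hφC2 : ∀ x : EuclideanSpace ℝ (Fin N), x ≠ 0 → ContDiffAt ℝ 2 φ x :=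
    fun x hx => barrier_contDiffAt hx
  have hφbnd : ∀ x : EuclideanSpace ℝ (Fin N), ‖x‖ = R → S ≤ φ x := by
    intro x hx
    rw [hφdef]
    show S ≤ c * Real.exp (-k * ‖x‖)
    rw [hcdef, hx, mul_assoc, ← Real.exp_add]
    have h1 : 0 ≤ k * C + -k * R := by
      rw [hCdef]; ring_nf; nlinarith
    nlinarith [Real.one_le_exp h1, hSpos]
  -- comparison for v
  have hcmp1 : ∀ x : EuclideanSpace ℝ (Fin N), R ≤ ‖x‖ → v x ≤ φ x := by
    apply comparison hR hμk hv hv0 hφcont hφ0 hφpos hφC2 hφlap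
    · exact fun x hx => le_trans (le_trans (le_abs_self _) (hS x)) (hφbnd x hx)
    · intro x hx hvx
      have h1 := hineq x
      have h2 : 0 ≤ lap v x + f x * v x - lam * v x :=
        nonneg_of_mul_nonneg_right h1 hvx
      have h3 := hfR x hx
      nlinarith [mul_pos (show (0:ℝ) < lamStar + ε/2 - f x from by linarith) hvx]
  -- comparison for -v
  have hcmp2 : ∀ x : EuclideanSpace ℝ (Fin N), R ≤ ‖x‖ → -(v x) ≤ φ x := by
    apply comparison hR hμk hv.neg (by simpa using hv0.neg) hφcont hφ0 hφpos hφC2 hφlap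
    · exact fun x hx => le_trans (le_trans (neg_le_abs _) (hS x)) (hφbnd x hx)
    · intro x hx hvx
      have hvx' : v x < 0 := by linarith
      have h1 := hineq x
      have h2 : lap v x + f x * v x - lam * v x ≤ 0 := by nlinarith
      have h3 := hfR x hx
      have h4 : lap (fun y => -(v y)) x = - lap v x := lap_neg v x
      rw [h4]
      nlinarith [mul_pos (show (0:ℝ) < lamStar + ε/2 - f x from by linarith)
        (show (0:ℝ) < -(v x) from hvx)]
  -- conclude
  intro x
  have hφeq : φ x = S * Real.exp (-k * (‖x‖ - C)) := by
    rw [hφdef]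
    show c * Real.exp (-k * ‖x‖) = _
    rw [hcdef, mul_assoc, ← Real.exp_add]
    congr 2
    ring
  by_cases hxR : R ≤ ‖x‖
  · have h1 := hcmp1 x hxR
    have h2 := hcmp2 x hxR
    rw [← hφeq]
    exact abs_le.2 ⟨by linarith, h1⟩
  · push_neg at hxR
    have h1 : 0 ≤ -k * (‖x‖ - C) := by
      rw [hCdef]
      nlinarith
    have h2 := Real.one_le_exp h1
    calc |v x| ≤ S := hS x
      _ ≤ S * Real.exp (-k * (‖x‖ - C)) := le_mul_of_one_le_right hS0 h2
end

section
/- Let λ > λ_* and let v ∈ C²(ℝ^N) with v(x) → 0 as |x| → ∞, satisfying v·(Δv + f_∞ v − λv) ≥ 0 on ℝ^N. If additionally v ∈ L^∞(ℝ^N), then v ∈ L^p(ℝ^N) for every p ∈ [1, ∞). -/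
open MeasureTheory Filter Topology

/- Auxiliary lemmas -/

lemma deriv2_nonpos_of_isLocalMax {φ : ℝ → ℝ} {a : ℝ}
    (hφ : ContDiff ℝ 2 φ) (hmax : IsLocalMax φ a) : deriv (deriv φ) a ≤ 0 := by
  by_contra hpos
  push_neg at hpos
  have hdiff : Differentiable ℝ φ := hφ.differentiable (by norm_num)
  have hφ' : ContDiff ℝ 1 (deriv φ) := by
    have h21 : (2 : WithTop ℕ∞) = 1 + 1 := by norm_num
    rw [h21] at hφ
    exact (contDiff_succ_iff_deriv.mp hφ).2.2
  have hd' : Differentiable ℝ (deriv φ) := hφ'.differentiable (by norm_num)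
  have hD : HasDerivAt (deriv φ) (deriv (deriv φ) a) a := (hd' a).hasDerivAt
  have h0 : deriv φ a = 0 := hmax.deriv_eq_zero
  have hslope := hasDerivAt_iff_tendsto_slope.mp hD
  have hev : ∀ᶠ t in 𝓝[≠] a, 0 < slope (deriv φ) a t :=
    hslope.eventually (eventually_gt_nhds hpos)
  rw [eventually_nhdsWithin_iff, Metric.eventually_nhds_iff] at hev
  obtain ⟨δ, hδ, hkey⟩ := hev
  have key : ∀ t, a < t → t < a + δ → 0 < deriv φ t := by
    intro t h1 h2'
    have hd : dist t a < δ := by rw [Real.dist_eq, abs_lt]; constructor <;> linarith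
    have := hkey hd (by simp; linarith : t ∈ ({a}ᶜ : Set ℝ))
    have hslope_eq : slope (deriv φ) a t = deriv φ t / (t - a) := by
      rw [slope_def_field, h0]; ring
    rw [hslope_eq] at this
    have ht : 0 < t - a := by linarith
    nlinarith [div_mul_cancel₀ (deriv φ t) ht.ne']
  have hmono : StrictMonoOn φ (Set.Icc a (a + δ / 2)) := by
    apply strictMonoOn_of_deriv_pos (convex_Icc _ _) hdiff.continuous.continuousOn
    intro t ht
    rw [interior_Icc] at ht
    exact key t ht.1 (by linarith [ht.2])
  have hmax' : ∀ᶠ y in 𝓝 a, φ y ≤ φ a := hmax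
  rw [Metric.eventually_nhds_iff] at hmax'
  obtain ⟨ε, hε, hloc⟩ := hmax'
  set m := min (δ / 2) ε with hm
  have hm0 : 0 < m := lt_min (by linarith) hε
  have h1 : φ a < φ (a + m / 2) := by
    apply hmono (Set.mem_Icc.mpr ⟨le_rfl, by linarith⟩)
      (Set.mem_Icc.mpr ⟨by linarith, by simp; linarith [min_le_left (δ/2) ε]⟩)
    linarith
  have h2'' : φ (a + m / 2) ≤ φ a := by
    apply hloc
    rw [Real.dist_eq]
    have : |a + m / 2 - a| = m / 2 := by rw [abs_of_nonneg] <;> [skip; linarith]; ring_nf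
    rw [this]; linarith [min_le_right (δ/2) ε]
  linarith

lemma diff_fderiv_apply {N : ℕ} {u : EuclideanSpace ℝ (Fin N) → ℝ}
    (hu : ContDiff ℝ 2 u) (e : EuclideanSpace ℝ (Fin N)) :
    Differentiable ℝ (fun y => fderiv ℝ u y e) := by
  have h1 : ContDiff ℝ 1 (fderiv ℝ u) := hu.fderiv_right (by norm_num)
  exact (h1.clm_apply contDiff_const).differentiable (by norm_num)

lemma lap_nonpos_of_isLocalMax_s3 {N : ℕ} {z : EuclideanSpace ℝ (Fin N) → ℝ}
    {x0 : EuclideanSpace ℝ (Fin N)}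
    (hz : ContDiff ℝ 2 z) (hmax : IsLocalMax z x0) : lap z x0 ≤ 0 := by
  have hzd : Differentiable ℝ z := hz.differentiable (by norm_num)
  apply Finset.sum_nonpos
  intro i _
  set e : EuclideanSpace ℝ (Fin N) := EuclideanSpace.single i 1 with he
  set L : ℝ → EuclideanSpace ℝ (Fin N) := fun s => x0 + s • e with hL
  have hLd : ∀ s, HasDerivAt L e s := by
    intro s
    have := ((hasDerivAt_id s).smul_const e).const_add x0
    simpa [hL] using this
  have hLc : ContDiff ℝ 2 L := contDiff_const.add (contDiff_id.smul contDiff_const)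
  have hL0 : L 0 = x0 := by simp [hL]
  set φ : ℝ → ℝ := fun s => z (L s) with hφdef
  have hφ : ContDiff ℝ 2 φ := hz.comp hLc
  have hmaxφ : IsLocalMax φ 0 := by
    have ht : Tendsto L (𝓝 0) (𝓝 x0) := by
      rw [← hL0]; exact hLc.continuous.tendsto 0
    have h := ht.eventually hmax
    unfold IsLocalMax IsMaxFilter
    simpa [hφdef, hL0] using h
  have h1 : deriv φ = fun s => fderiv ℝ z (L s) e := by
    funext s
    exact ((hzd (L s)).hasFDerivAt.comp_hasDerivAt s (hLd s)).deriv
  have hq : Differentiable ℝ (fun y => fderiv ℝ z y e) := diff_fderiv_apply hz e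
  have h2 : deriv (deriv φ) 0 = fderiv ℝ (fun y => fderiv ℝ z y e) x0 e := by
    rw [h1]
    have := ((hq (L 0)).hasFDerivAt.comp_hasDerivAt 0 (hLd 0)).deriv
    rw [hL0] at this
    exact this
  rw [← h2]
  exact deriv2_nonpos_of_isLocalMax hφ hmaxφ

lemma lap_sub_const_mul {N : ℕ} {u w : EuclideanSpace ℝ (Fin N) → ℝ}
    (hu : ContDiff ℝ 2 u) (hw : ContDiff ℝ 2 w) (A : ℝ) (x : EuclideanSpace ℝ (Fin N)) :
    lap (fun y => u y - A * w y) x = lap u x - A * lap w x := by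
  have hud : Differentiable ℝ u := hu.differentiable (by norm_num)
  have hwd : Differentiable ℝ w := hw.differentiable (by norm_num)
  have hfd : ∀ e, (fun y => fderiv ℝ (fun y' => u y' - A * w y') y e)
      = fun y => fderiv ℝ u y e - A * fderiv ℝ w y e := by
    intro e; funext y
    rw [fderiv_fun_sub (hud y) ((hwd y).const_mul A), fderiv_const_mul (hwd y)]
    simp
  unfold lap
  rw [Finset.mul_sum, ← Finset.sum_sub_distrib]
  apply Finset.sum_congr rfl
  intro i _
  set e : EuclideanSpace ℝ (Fin N) := EuclideanSpace.single i 1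
  rw [hfd e]
  have hqu := diff_fderiv_apply hu e
  have hqw := diff_fderiv_apply hw e
  rw [fderiv_fun_sub (hqu x) ((hqw x).const_mul A), fderiv_const_mul (hqw x)]
  simp

lemma lap_sq {N : ℕ} {u : EuclideanSpace ℝ (Fin N) → ℝ} (hu : ContDiff ℝ 2 u)
    (x : EuclideanSpace ℝ (Fin N)) :
    lap (fun y => u y * u y) x
      = 2 * u x * lap u x + 2 * ∑ i, (fderiv ℝ u x (EuclideanSpace.single i 1))^2 := by
  have hud : Differentiable ℝ u := hu.differentiable (by norm_num)
  have hfd : ∀ e, (fun y => fderiv ℝ (fun y' => u y' * u y') y e)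
      = fun y => 2 * (u y * fderiv ℝ u y e) := by
    intro e; funext y
    rw [fderiv_fun_mul (hud y) (hud y)]
    simp [smul_eq_mul]; ring
  have key : ∀ e : EuclideanSpace ℝ (Fin N),
      fderiv ℝ (fun y => fderiv ℝ (fun y' => u y' * u y') y e) x e
      = 2 * (u x * fderiv ℝ (fun y => fderiv ℝ u y e) x e
          + fderiv ℝ u x e * fderiv ℝ u x e) := by
    intro e
    rw [hfd e]
    have hq := diff_fderiv_apply hu e
    rw [fderiv_const_mul ((hud x).fun_mul (hq x)), fderiv_fun_mul (hud x) (hq x)]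
    simp [smul_eq_mul]
    ring
  unfold lap
  simp_rw [key]
  rw [Finset.mul_sum, Finset.mul_sum, ← Finset.sum_add_distrib]
  apply Finset.sum_congr rfl
  intro i _
  ring

lemma contDiff_w {N : ℕ} (t : ℝ) :
    ContDiff ℝ 2 (fun y : EuclideanSpace ℝ (Fin N) => (1 + ‖y‖^2) ^ (-t)) :=
  (contDiff_const.add (contDiff_norm_sq ℝ)).rpow_const_of_ne
    (fun y => by positivity)

lemma lap_w {N : ℕ} (t : ℝ) (x : EuclideanSpace ℝ (Fin N)) :
    lap (fun y => (1 + ‖y‖^2) ^ (-t)) x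
      = 4*t*(t+1) * (1 + ‖x‖^2) ^ (-t-2) * ‖x‖^2 - 2*t*N * (1 + ‖x‖^2) ^ (-t-1) := by
  set g : EuclideanSpace ℝ (Fin N) → ℝ := fun y => 1 + ‖y‖^2 with hgdef
  have hgpos : ∀ y : EuclideanSpace ℝ (Fin N), 0 < g y := fun y => by positivity
  have hg' : ∀ y : EuclideanSpace ℝ (Fin N), HasFDerivAt g (2 • innerSL ℝ y) y := by
    intro y
    exact ((hasStrictFDerivAt_norm_sq y).hasFDerivAt).const_add 1
  have hrpow : ∀ (s : ℝ) (y : EuclideanSpace ℝ (Fin N)),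
      HasFDerivAt (fun z => g z ^ s) ((s * g y ^ (s-1)) • (2 • innerSL ℝ y)) y := by
    intro s y
    have h := Real.hasDerivAt_rpow_const (x := g y) (p := s) (Or.inl (hgpos y).ne')
    have := h.comp_hasFDerivAt y (hg' y)
    exact this
  have hinner : ∀ (e y : EuclideanSpace ℝ (Fin N)),
      HasFDerivAt (fun z => (inner ℝ z e : ℝ)) (innerSL ℝ e) y := by
    intro e y
    have heq : (fun z : EuclideanSpace ℝ (Fin N) => (inner ℝ z e : ℝ))
        = fun z => (innerSL ℝ e) z := by
      funext z; rw [innerSL_apply_apply]; exact real_inner_comm e z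
    rw [heq]
    exact (innerSL ℝ e).hasFDerivAt
  have hfun : ∀ e : EuclideanSpace ℝ (Fin N),
      (fun y => fderiv ℝ (fun z => g z ^ (-t)) y e)
        = fun y => (-2*t) * (g y ^ (-t-1) * (inner ℝ y e : ℝ)) := by
    intro e; funext y
    rw [(hrpow (-t) y).fderiv]
    simp [smul_eq_mul]
    ring
  have key : ∀ e : EuclideanSpace ℝ (Fin N),
      fderiv ℝ (fun y => fderiv ℝ (fun z => g z ^ (-t)) y e) x e
        = (-2*t) * (g x ^ (-t-1) * (inner ℝ e e : ℝ)
            + (inner ℝ x e : ℝ) * ((-t-1) * g x ^ (-t-2) * (2 * (inner ℝ x e : ℝ)))) := by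
    intro e
    rw [hfun e]
    have hq := hrpow (-t-1) x
    rw [show (-t-1-1 : ℝ) = -t-2 by ring] at hq
    have hr := hinner e x
    have hmul := (hq.fun_mul hr).const_mul (-2*t)
    rw [hmul.fderiv]
    simp only [ContinuousLinearMap.smul_apply, ContinuousLinearMap.add_apply,
      smul_eq_mul, innerSL_apply_apply]
    ring
  have hsum : ∑ i, (x i * x i) = ‖x‖^2 := by
    rw [← real_inner_self_eq_norm_sq]
    simp only [PiLp.inner_apply, RCLike.inner_apply, conj_trivial]
  unfold lap
  have hterm : ∀ i : Fin N,
      fderiv ℝ (fun y => fderiv ℝ (fun z => g z ^ (-t)) y (EuclideanSpace.single i 1)) x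
        (EuclideanSpace.single i 1)
      = (-2*t) * g x ^ (-t-1) + (4*t*(t+1) * g x ^ (-t-2)) * (x i * x i) := by
    intro i
    rw [key (EuclideanSpace.single i 1)]
    have h1 : (inner ℝ x (EuclideanSpace.single i (1:ℝ)) : ℝ) = x i := by
      rw [EuclideanSpace.inner_single_right]; simp
    have h2 : (inner ℝ (EuclideanSpace.single i (1:ℝ)) (EuclideanSpace.single i (1:ℝ)) : ℝ) = 1 := by
      rw [EuclideanSpace.inner_single_right]; simp
    rw [h1, h2]
    ring
  calc (∑ i, fderiv ℝ (fun y => fderiv ℝ (fun z => g z ^ (-t)) y (EuclideanSpace.single i 1)) x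
        (EuclideanSpace.single i 1))
      = ∑ i : Fin N, ((-2*t) * g x ^ (-t-1) + (4*t*(t+1) * g x ^ (-t-2)) * (x i * x i)) := by
        exact Finset.sum_congr rfl (fun i _ => hterm i)
    _ = (N : ℝ) * ((-2*t) * g x ^ (-t-1)) + (4*t*(t+1) * g x ^ (-t-2)) * ∑ i, (x i * x i) := by
        rw [Finset.sum_add_distrib, Finset.sum_const, ← Finset.mul_sum]
        simp [nsmul_eq_mul]
    _ = 4*t*(t+1) * (1 + ‖x‖^2) ^ (-t-2) * ‖x‖^2 - 2*t*N * (1 + ‖x‖^2) ^ (-t-1) := by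
        rw [hsum, hgdef]
        ring

lemma cocompact_radius {N : ℕ} {p : EuclideanSpace ℝ (Fin N) → Prop}
    (h : ∀ᶠ x in cocompact (EuclideanSpace ℝ (Fin N)), p x) :
    ∃ R : ℝ, ∀ x, R ≤ ‖x‖ → p x := by
  obtain ⟨K, hK, hKs⟩ := hasBasis_cocompact.eventually_iff.mp h
  obtain ⟨R, hR⟩ := hK.isBounded.subset_closedBall 0
  refine ⟨R + 1, fun x hx => hKs ?_⟩
  intro hxK
  have := hR hxK
  rw [Metric.mem_closedBall, dist_zero_right] at this
  linarith

set_option maxHeartbeats 2000000 in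
/-- if `λ > λ_* = limsup_{|x|→∞} f_∞(x)` and the bounded `C²` function `v`,
vanishing at infinity, satisfies `v·(Δv + f_∞ v − λ v) ≥ 0` on `ℝ^N`, then
`v ∈ L^p(ℝ^N)` for every `p ∈ [1, ∞)`. -/
theorem stmt3 {N : ℕ} (hN : 1 ≤ N)
    (f : EuclideanSpace ℝ (Fin N) → ℝ) (hfc : Continuous f) (hfb : ∃ M, ∀ x, |f x| ≤ M)
    (lamStar lam : ℝ) (hstar : lamStar = limsup f (cocompact (EuclideanSpace ℝ (Fin N))))
    (hlam : lamStar < lam)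
    (v : EuclideanSpace ℝ (Fin N) → ℝ) (hv : ContDiff ℝ 2 v)
    (hvb : ∃ M, ∀ x, |v x| ≤ M)
    (hv0 : Tendsto v (cocompact (EuclideanSpace ℝ (Fin N))) (nhds 0))
    (hineq : ∀ x, 0 ≤ v x * (lap v x + f x * v x - lam * v x)) :
    ∀ p : ℝ, 1 ≤ p → MemLp v (ENNReal.ofReal p) volume := by
  intro p hp
  obtain ⟨M, hM⟩ := hvb
  have hM0 : 0 ≤ M := le_trans (abs_nonneg _) (hM 0)
  set c : ℝ := (lam - lamStar)/2 with hcdef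
  have hc0 : 0 < c := by rw [hcdef]; linarith
  -- f is eventually below lam - c
  have hflt : ∀ᶠ x in cocompact (EuclideanSpace ℝ (Fin N)), f x < lam - c := by
    apply eventually_lt_of_limsup_lt
    · rw [← hstar]; rw [hcdef]; linarith
    · obtain ⟨Mf, hMf⟩ := hfb
      exact isBoundedUnder_of ⟨Mf, fun x => le_trans (le_abs_self _) (hMf x)⟩
  obtain ⟨R₀, hR₀⟩ := cocompact_radius hflt
  set t : ℝ := N + 1 with htdef
  have ht0 : 0 < t := by rw [htdef]; positivity
  set R : ℝ := max R₀ (max 1 (Real.sqrt (2*t*(t+1)/c))) with hRdef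
  have hR1 : 1 ≤ R := le_trans (le_max_left 1 _) (le_max_right _ _)
  have hRf : ∀ x : EuclideanSpace ℝ (Fin N), R ≤ ‖x‖ → f x ≤ lam - c :=
    fun x hx => (hR₀ x (le_trans (le_max_left _ _) hx)).le
  have hRg : ∀ x : EuclideanSpace ℝ (Fin N), R ≤ ‖x‖ → 4*t*(t+1) ≤ 2*c*(1+‖x‖^2) := by
    intro x hx
    have h1 : Real.sqrt (2*t*(t+1)/c) ≤ ‖x‖ :=
      le_trans (le_trans (le_max_right _ _) (le_max_right _ _)) hx
    have h2 : 2*t*(t+1)/c ≤ ‖x‖^2 := by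
      rw [← Real.sq_sqrt (show (0:ℝ) ≤ 2*t*(t+1)/c by positivity)]
      exact pow_le_pow_left₀ (Real.sqrt_nonneg _) h1 2
    rw [div_le_iff₀ hc0] at h2
    nlinarith
  clear_value c R
  set w : EuclideanSpace ℝ (Fin N) → ℝ := fun x => (1+‖x‖^2)^(-t) with hwdef
  set h : EuclideanSpace ℝ (Fin N) → ℝ := fun x => v x * v x with hhdef
  set A : ℝ := M^2 * (1+R^2)^t with hAdef
  have hA0 : 0 ≤ A := by positivity
  set z : EuclideanSpace ℝ (Fin N) → ℝ := fun x => h x - A * w x with hzdef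
  have hwcd : ContDiff ℝ 2 w := contDiff_w t
  have hhcd : ContDiff ℝ 2 h := hv.mul hv
  have hzcd : ContDiff ℝ 2 z := hhcd.sub (contDiff_const.mul hwcd)
  have hwpos : ∀ x : EuclideanSpace ℝ (Fin N), 0 < w x :=
    fun x => Real.rpow_pos_of_pos (by positivity) _
  -- lower bound for lap h on the exterior region
  have hlaph : ∀ x : EuclideanSpace ℝ (Fin N), R ≤ ‖x‖ → 2*c*h x ≤ lap h x := by
    intro x hx
    have hf1 : lap h x = 2 * v x * lap v x
        + 2 * ∑ i, (fderiv ℝ v x (EuclideanSpace.single i 1))^2 := lap_sq hv x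
    have h1 : (lam - f x) * (v x * v x) ≤ v x * lap v x := by
      have := hineq x; nlinarith
    have h2 : c * (v x * v x) ≤ (lam - f x) * (v x * v x) := by
      have hfx := hRf x hx
      nlinarith [mul_self_nonneg (v x)]
    have h3 : (0:ℝ) ≤ ∑ i, (fderiv ℝ v x (EuclideanSpace.single i 1))^2 :=
      Finset.sum_nonneg (fun i _ => sq_nonneg _)
    have hhx : h x = v x * v x := rfl
    rw [hf1, hhx]
    nlinarith
  -- upper bound for lap w on the exterior region
  have hlapw : ∀ x : EuclideanSpace ℝ (Fin N), R ≤ ‖x‖ → lap w x ≤ 2*c*w x := by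
    intro x hx
    have hf1 : lap w x = 4*t*(t+1) * (1 + ‖x‖^2) ^ (-t-2) * ‖x‖^2
        - 2*t*N * (1 + ‖x‖^2) ^ (-t-1) := lap_w t x
    set G : ℝ := 1 + ‖x‖^2 with hGdef
    have hGpos : 0 < G := by positivity
    have emul : ∀ s : ℝ, G ^ s * G = G ^ (s+1) := fun s => by
      rw [Real.rpow_add hGpos s 1, Real.rpow_one]
    have e1 : G ^ (-t-2) * G = G ^ (-t-1) := by rw [emul]; congr 1; ring
    have e2 : G ^ (-t-1) * G = G ^ (-t) := by rw [emul]; congr 1; ring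
    have p1 : 0 < G ^ (-t-2) := Real.rpow_pos_of_pos hGpos _
    have p2 : 0 < G ^ (-t-1) := Real.rpow_pos_of_pos hGpos _
    have hx2 : ‖x‖^2 ≤ G := by rw [hGdef]; linarith
    have hg := hRg x hx
    have hNt : (0:ℝ) ≤ 2*t*N := by positivity
    have hwx : w x = G ^ (-t) := rfl
    rw [hf1, hwx]
    have s1 : 4*t*(t+1) * (G ^ (-t-2) * ‖x‖^2) ≤ 4*t*(t+1) * (G ^ (-t-2) * G) := by
      apply mul_le_mul_of_nonneg_left _ (by positivity)
      exact mul_le_mul_of_nonneg_left hx2 p1.le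
    have s2 : 4*t*(t+1) * G ^ (-t-1) ≤ (2*c*G) * G ^ (-t-1) :=
      mul_le_mul_of_nonneg_right hg p2.le
    have s3 : (2*c*G) * G ^ (-t-1) = 2*c*G^(-t) := by
      rw [show (2*c*G) * G ^ (-t-1) = 2*c*(G^(-t-1)*G) by ring, e2]
    rw [e1] at s1
    nlinarith [p2, mul_pos (mul_pos (by linarith : (0:ℝ) < 2) hc0) hGpos]
  -- interior estimate: h ≤ A w on the closed ball of radius R
  have hball : ∀ x : EuclideanSpace ℝ (Fin N), ‖x‖ ≤ R → h x ≤ A * w x := by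
    intro x hx
    have h1 : h x ≤ M^2 := by
      have hMx := hM x
      have h2 : h x = |v x| * |v x| := (abs_mul_abs_self _).symm
      rw [h2, sq]
      exact mul_le_mul hMx hMx (abs_nonneg _) hM0
    have hxpos : (0:ℝ) < (1+‖x‖^2)^t := Real.rpow_pos_of_pos (by positivity) _
    have h2 : (1+‖x‖^2) ^ t ≤ (1+R^2)^t := by
      apply Real.rpow_le_rpow (by positivity) _ ht0.le
      exact add_le_add_right (pow_le_pow_left₀ (norm_nonneg x) hx 2) 1
    have h3 : M^2 ≤ A * w x := by
      have hwx : w x = ((1+‖x‖^2)^t)⁻¹ := by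
        rw [hwdef]; simp only []
        rw [← Real.rpow_neg (by positivity) t]
      rw [hAdef, hwx, mul_assoc]
      apply le_mul_of_one_le_right (sq_nonneg M)
      rw [← div_eq_mul_inv, le_div_iff₀ hxpos, one_mul]
      exact h2
    exact le_trans h1 h3
  have hweq : ∀ x : EuclideanSpace ℝ (Fin N), w x = (1+‖x‖^2)^(-t) := fun x => rfl
  have hheq : ∀ x : EuclideanSpace ℝ (Fin N), h x = v x * v x := fun x => rfl
  have hzeq : ∀ x : EuclideanSpace ℝ (Fin N), z x = h x - A * w x := fun x => rfl
  have hlapz : ∀ x : EuclideanSpace ℝ (Fin N), lap z x = lap h x - A * lap w x :=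
    lap_sub_const_mul hhcd hwcd A
  have hzc : Continuous z := hzcd.continuous
  have hz0 : Tendsto z (cocompact (EuclideanSpace ℝ (Fin N))) (𝓝 0) := by
    have h1 : Tendsto h (cocompact (EuclideanSpace ℝ (Fin N))) (𝓝 0) := by
      have hmul := hv0.mul hv0
      rw [show ((0:ℝ) * 0) = 0 by ring] at hmul
      rw [hhdef]
      exact hmul
    have h2 : Tendsto w (cocompact (EuclideanSpace ℝ (Fin N))) (𝓝 0) := by
      have hn : Tendsto (fun x : EuclideanSpace ℝ (Fin N) => 1 + ‖x‖^2)
          (cocompact (EuclideanSpace ℝ (Fin N))) atTop := by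
        apply tendsto_atTop_add_const_left
        exact (tendsto_pow_atTop (by norm_num : 2 ≠ 0)).comp tendsto_norm_cocompact_atTop
      exact (tendsto_rpow_neg_atTop ht0).comp hn
    have hsub := h1.sub ((tendsto_const_nhds (x := A)).mul h2)
    rw [show ((0:ℝ) - A * 0) = 0 by ring] at hsub
    rw [hzdef]
    exact hsub
  clear_value w h z A
  -- maximum principle: z ≤ 0 on the exterior region
  have hzle : ∀ x : EuclideanSpace ℝ (Fin N), R ≤ ‖x‖ → z x ≤ 0 := by
    by_contra hcon
    push_neg at hcon
    obtain ⟨x1, hx1R, hx1z⟩ := hcon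
    have hev : ∀ᶠ x in cocompact (EuclideanSpace ℝ (Fin N)), z x < z x1 :=
      hz0.eventually (eventually_lt_nhds hx1z)
    obtain ⟨R', hR'⟩ := cocompact_radius hev
    set R'' : ℝ := max R' ‖x1‖ with hR''def
    set T : Set (EuclideanSpace ℝ (Fin N)) :=
      Metric.closedBall 0 R'' ∩ {x | R ≤ ‖x‖} with hTdef
    have hTc : IsCompact T :=
      (isCompact_closedBall 0 R'').inter_right (isClosed_le continuous_const continuous_norm)
    have hx1T : x1 ∈ T := by
      constructor
      · rw [Metric.mem_closedBall, dist_zero_right]; exact le_max_right _ _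
      · exact hx1R
    obtain ⟨x0, hx0T, hx0max⟩ := hTc.exists_isMaxOn ⟨x1, hx1T⟩ hzc.continuousOn
    have hzx0 : z x1 ≤ z x0 := hx0max hx1T
    have hx0pos : 0 < z x0 := lt_of_lt_of_le hx1z hzx0
    have hx0R : R < ‖x0‖ := by
      rcases lt_or_ge R ‖x0‖ with hlt | hle
      · exact hlt
      · exfalso
        have := hball x0 hle
        have hzx0' : z x0 = h x0 - A * w x0 := hzeq x0
        rw [hzx0'] at hx0pos
        linarith
    have hmax : IsLocalMax z x0 := by
      have hball_nhds : Metric.ball x0 (‖x0‖ - R) ∈ 𝓝 x0 :=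
        Metric.ball_mem_nhds _ (by linarith)
      filter_upwards [hball_nhds] with y hy
      have hyR : R < ‖y‖ := by
        rw [Metric.mem_ball] at hy
        have h1 : dist y x0 = ‖y - x0‖ := dist_eq_norm _ _
        have h2 : ‖x0‖ - ‖y‖ ≤ ‖x0 - y‖ := norm_sub_norm_le _ _
        rw [norm_sub_rev] at h2
        rw [h1] at hy
        linarith
      rcases le_or_gt ‖y‖ R'' with hyT | hyT
      · apply hx0max
        constructor
        · rw [Metric.mem_closedBall, dist_zero_right]; exact hyT
        · exact hyR.le
      · have : z y < z x1 := hR' y (le_of_lt (lt_of_le_of_lt (le_max_left _ _) hyT))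
        exact le_trans this.le hzx0
    have hlap0 : lap z x0 ≤ 0 := lap_nonpos_of_isLocalMax_s3 hzcd hmax
    have e1 := hlaph x0 hx0R.le
    have e2 := hlapw x0 hx0R.le
    have e3 : A * lap w x0 ≤ A * (2*c*w x0) := mul_le_mul_of_nonneg_left e2 hA0
    have hzx0' : z x0 = h x0 - A * w x0 := hzeq x0
    have hfinal : 2*c*z x0 ≤ lap z x0 := by
      rw [hlapz x0, hzx0']
      nlinarith
    nlinarith [mul_pos (mul_pos (by linarith : (0:ℝ) < 2) hc0) hx0pos]
  -- global pointwise bound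
  have hglobal : ∀ x : EuclideanSpace ℝ (Fin N), v x * v x ≤ A * w x := by
    intro x
    rcases le_or_gt ‖x‖ R with hx | hx
    · have h1 := hball x hx
      rw [hheq x] at h1
      exact h1
    · have h1 := hzle x hx.le
      rw [hzeq x, hheq x] at h1
      linarith
  -- convert to a bound by (1+‖x‖)^(-2t)
  set D : ℝ := A * 2^t with hDdef
  have hD0 : 0 ≤ D := by positivity
  have hbound : ∀ x : EuclideanSpace ℝ (Fin N), |v x| ≤ Real.sqrt D * (1+‖x‖) ^ (-t) := by
    intro x
    have ha : (0:ℝ) < 1 + ‖x‖ := by positivity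
    have hb : (0:ℝ) < 1 + ‖x‖^2 := by positivity
    have key : (1+‖x‖^2)^(-t) ≤ 2^t * (1+‖x‖)^(-2*t) := by
      have h1 : (1+‖x‖)^2 ≤ 2*(1+‖x‖^2) := by nlinarith [norm_nonneg x, sq_nonneg (‖x‖ - 1)]
      have h2 : ((1+‖x‖)^2 : ℝ) ^ t ≤ (2*(1+‖x‖^2)) ^ t :=
        Real.rpow_le_rpow (by positivity) h1 ht0.le
      have h3 : ((1+‖x‖)^2 : ℝ) ^ t = (1+‖x‖) ^ (2*t) := by
        rw [← Real.rpow_natCast (1+‖x‖) 2, ← Real.rpow_mul ha.le]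
        norm_num
      have h4 : ((2:ℝ)*(1+‖x‖^2)) ^ t = 2^t * (1+‖x‖^2)^t :=
        Real.mul_rpow (by norm_num) hb.le
      rw [h3, h4] at h2
      have p5 : (0:ℝ) < (1+‖x‖)^(2*t) := Real.rpow_pos_of_pos ha _
      have p6 : (0:ℝ) < (1+‖x‖^2)^t := Real.rpow_pos_of_pos hb _
      rw [show (-2*t : ℝ) = -(2*t) by ring]
      rw [Real.rpow_neg hb.le, Real.rpow_neg ha.le]
      rw [inv_le_iff_one_le_mul₀ p6]
      calc (1:ℝ) = (1+‖x‖)^(2*t) * ((1+‖x‖)^(2*t))⁻¹ := by field_simp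
        _ ≤ (2^t * (1+‖x‖^2)^t) * ((1+‖x‖)^(2*t))⁻¹ := by
            apply mul_le_mul_of_nonneg_right h2 (by positivity)
        _ = 2 ^ t * ((1 + ‖x‖) ^ (2*t))⁻¹ * (1 + ‖x‖ ^ 2) ^ t := by ring
    have hv2 : v x * v x ≤ D * (1+‖x‖)^(-2*t) := by
      have := hglobal x
      rw [hweq x] at this
      calc v x * v x ≤ A * (1+‖x‖^2)^(-t) := this
        _ ≤ A * (2^t * (1+‖x‖)^(-2*t)) := mul_le_mul_of_nonneg_left key hA0
        _ = D * (1+‖x‖)^(-2*t) := by rw [hDdef]; ring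
    have habs : |v x|^2 ≤ D * (1+‖x‖)^(-2*t) := by
      rw [sq_abs]; nlinarith [hv2]
    have h7 : Real.sqrt D * (1+‖x‖) ^ (-t) = Real.sqrt (D * (1+‖x‖)^(-2*t)) := by
      rw [Real.sqrt_mul hD0]
      congr 1
      rw [Real.sqrt_eq_rpow, ← Real.rpow_mul ha.le]
      congr 1
      ring
    rw [h7]
    have := Real.sqrt_le_sqrt habs
    calc |v x| = Real.sqrt (|v x|^2) := by rw [Real.sqrt_sq (abs_nonneg _)]
      _ ≤ Real.sqrt (D * (1+‖x‖)^(-2*t)) := this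
  -- integrability
  have hqmeas : Continuous (fun x : EuclideanSpace ℝ (Fin N) => ‖v x‖ ^ p) :=
    (hv.continuous.norm).rpow_const (fun x => Or.inr (by linarith))
  have hint : Integrable (fun x : EuclideanSpace ℝ (Fin N) => ‖v x‖ ^ p) volume := by
    have hN' : ((Module.finrank ℝ (EuclideanSpace ℝ (Fin N))) : ℝ) < t * p := by
      rw [finrank_euclideanSpace_fin, htdef]
      nlinarith
    have hintb : Integrable
        (fun x : EuclideanSpace ℝ (Fin N) => (Real.sqrt D)^p * (1 + ‖x‖) ^ (-(t*p))) volume :=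
      (integrable_one_add_norm hN').const_mul _
    apply hintb.mono' hqmeas.aestronglyMeasurable
    apply ae_of_all
    intro x
    have ha : (0:ℝ) < 1 + ‖x‖ := by positivity
    have h1 : ‖v x‖ ^ p ≤ (Real.sqrt D * (1+‖x‖) ^ (-t)) ^ p := by
      apply Real.rpow_le_rpow (norm_nonneg _) _ (by linarith)
      rw [Real.norm_eq_abs]
      exact hbound x
    have h2 : (Real.sqrt D * (1+‖x‖) ^ (-t)) ^ p
        = (Real.sqrt D)^p * (1 + ‖x‖) ^ (-(t*p)) := by
      rw [Real.mul_rpow (Real.sqrt_nonneg _) (by positivity)]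
      congr 1
      rw [← Real.rpow_mul ha.le]
      ring_nf
    rw [Real.norm_eq_abs, abs_of_nonneg (Real.rpow_nonneg (norm_nonneg _) _)]
    rw [h2] at h1
    exact h1
  -- conclude
  have hq0 : (ENNReal.ofReal p) ≠ 0 := by
    simp only [ne_eq, ENNReal.ofReal_eq_zero, not_le]
    linarith
  have hqt : (ENNReal.ofReal p) ≠ ⊤ := ENNReal.ofReal_ne_top
  have hiff := memLp_norm_rpow_iff (μ := (volume : Measure (EuclideanSpace ℝ (Fin N)))) (p := ENNReal.ofReal p) (q := ENNReal.ofReal p)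
    hv.continuous.aestronglyMeasurable hq0 hqt
  apply hiff.mp
  rw [ENNReal.div_self hq0 hqt]
  rw [memLp_one_iff_integrable]
  have htp : (ENNReal.ofReal p).toReal = p := ENNReal.toReal_ofReal (by linarith)
  rw [htp]
  exact hint
end
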